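/- Let β ≥ 1 and define h(w) := β(1 − rw/c)^d for w ∈ [0, c/r]. Then h is strictly decreasing and convex on [0, c/r], h(c/r) = 0, h′(c/r) = 0, and for every w ∈ (0, c/r) and every α ∈ ℝ one has [rw + (μ−r)α − c]·h′(w) + (1/2)σ²α²·h″(w) − λ·h(w) ≥ 0, with equality if and only if α = ((μ−r)/(σ²(d−1)))·(c/r − w). -/

import Mathlib

set_option maxHeartbeats 1000000

theorem stmt_1 (r mu sigma lam c m d : ℝ)
    (hr : 0 < r) (hmu : r < mu) (hs : 0 < sigma) (hlam : 0 < lam) (hc : 0 < c)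
    (hm : m = (mu - r)^2 / (2 * sigma^2))
    (hd : d = ((r + lam + m) + Real.sqrt ((r + lam + m)^2 - 4*r*lam)) / (2*r))
    (beta : ℝ) (hbeta : 1 ≤ beta)
    (h : ℝ → ℝ) (hh : ∀ w, h w = beta * (1 - r * w / c) ^ d) :
    StrictAntiOn h (Set.Icc 0 (c/r)) ∧
    ConvexOn ℝ (Set.Icc 0 (c/r)) h ∧
    h (c/r) = 0 ∧
    deriv h (c/r) = 0 ∧
    ∀ w ∈ Set.Ioo 0 (c/r), ∀ α : ℝ,
      0 ≤ (r * w + (mu - r) * α - c) * deriv h w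
            + (1/2) * sigma^2 * α^2 * deriv (deriv h) w - lam * h w ∧
      ((r * w + (mu - r) * α - c) * deriv h w
            + (1/2) * sigma^2 * α^2 * deriv (deriv h) w - lam * h w = 0
        ↔ α = ((mu - r) / (sigma^2 * (d - 1))) * (c/r - w)) := by
  have hc0 : c ≠ 0 := hc.ne'
  have hr0 : r ≠ 0 := hr.ne'
  have hs0 : (sigma:ℝ)^2 ≠ 0 := by positivity
  have hm0 : 0 < m := by
    rw [hm]; exact div_pos (pow_pos (by linarith) 2) (by positivity)
  set s := Real.sqrt ((r + lam + m)^2 - 4*r*lam) with hsdef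
  have hDnn : 0 ≤ (r + lam + m)^2 - 4*r*lam := by
    nlinarith [sq_nonneg (m + lam - r), mul_pos hr hm0]
  have hsq : s^2 = (r + lam + m)^2 - 4*r*lam := Real.sq_sqrt hDnn
  have hsnn : 0 ≤ s := Real.sqrt_nonneg _
  have hsgt : r - lam - m < s := by
    rcases le_or_gt (r - lam - m) 0 with h0 | h0
    · have h1 : 0 < s^2 := by nlinarith [mul_pos hr hm0, sq_nonneg (r - lam - m)]
      nlinarith [hsnn]
    · nlinarith [mul_pos hr hm0]
  have hd1 : 1 < d := by
    rw [hd, lt_div_iff₀ (by linarith : (0:ℝ) < 2*r)]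
    linarith
  have h2 : 2*r*d - (r+lam+m) = s := by
    rw [hd]; field_simp; ring
  have h3 : (2*r*d - (r+lam+m))^2 = (r+lam+m)^2 - 4*r*lam := by rw [h2]; exact hsq
  have hquad : r*d^2 - (r+lam+m)*d + lam = 0 := by
    have h4 : 4*r*(r*d^2 - (r+lam+m)*d + lam) = 0 := by linear_combination h3
    rcases mul_eq_zero.mp h4 with h5 | h5
    · exfalso; linarith
    · exact h5
  have hkey : (d-1)*(r*d - lam) = m*d := by nlinarith [hquad]
  have hmm : m * (2*sigma^2) = (mu - r)^2 := by rw [hm]; field_simp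
  have hd1ne : d - 1 ≠ 0 := ne_of_gt (by linarith)
  have hRD : r*d - lam = (mu - r)^2 * d / (2*sigma^2*(d-1)) := by
    rw [eq_div_iff (mul_ne_zero (by positivity) hd1ne)]
    linear_combination 2*sigma^2*hkey + d*hmm
  set g : ℝ → ℝ := fun w => 1 - r*w/c with hgdef
  have hgderiv : ∀ w : ℝ, HasDerivAt g (-(r/c)) w := by
    intro w
    have h1 : HasDerivAt (fun x : ℝ => 1 - r*x/c) (-(r*1/c)) w :=
      ((hasDerivAt_id w).const_mul r |>.div_const c).const_sub 1
    simpa [hgdef] using h1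
  have hH1 : ∀ w : ℝ, HasDerivAt h (beta * (-(r/c) * d * (g w)^(d-1))) w := by
    intro w
    have h1 : HasDerivAt (fun w => (g w)^d) (-(r/c) * d * (g w)^(d-1)) w :=
      (hgderiv w).rpow_const (Or.inr hd1.le)
    have h2 := h1.const_mul beta
    have heq : h = fun w => beta * (g w)^d := by funext w; exact hh w
    rw [heq]
    exact h2
  have hD1 : ∀ w : ℝ, deriv h w = beta * (-(r/c) * d * (g w)^(d-1)) := fun w => (hH1 w).deriv
  have hgpos : ∀ w ∈ Set.Ioo (0:ℝ) (c/r), 0 < g w := by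
    intro w hw
    have hwc : r*w < c := by
      have := hw.2
      rw [lt_div_iff₀ hr] at this; linarith
    show 0 < 1 - r*w/c
    rw [sub_pos, div_lt_one hc]; exact hwc
  have hH2 : ∀ w ∈ Set.Ioo (0:ℝ) (c/r),
      HasDerivAt (deriv h) (beta * d * (d-1) * (r/c)^2 * (g w)^(d-2)) w := by
    intro w hw
    have hne : g w ≠ 0 := (hgpos w hw).ne'
    have h1 : HasDerivAt (fun w => (g w)^(d-1)) (-(r/c) * (d-1) * (g w)^(d-1-1)) w :=
      (hgderiv w).rpow_const (Or.inl hne)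
    have h2 := h1.const_mul (beta * (-(r/c) * d))
    have heq : deriv h = fun w => (beta * (-(r/c) * d)) * (g w)^(d-1) := by
      funext x; rw [hD1 x]; ring
    rw [heq]
    have h3 : beta * (-(r/c) * d) * (-(r/c) * (d-1) * (g w)^(d-1-1))
        = beta * d * (d-1) * (r/c)^2 * (g w)^(d-2) := by
      rw [show d - 1 - 1 = d - 2 by ring]; ring
    rw [← h3]
    exact h2
  have hD2 : ∀ w ∈ Set.Ioo (0:ℝ) (c/r),
      deriv (deriv h) w = beta * d * (d-1) * (r/c)^2 * (g w)^(d-2) :=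
    fun w hw => (hH2 w hw).deriv
  have hcont : Continuous h := by
    have heq : h = fun w => beta * (g w)^d := by funext w; exact hh w
    rw [heq]
    exact continuous_const.mul
      (((continuous_const.sub ((continuous_const.mul continuous_id).div_const c))).rpow_const
        (fun x => Or.inr (by linarith)))
  have hintIcc : interior (Set.Icc (0:ℝ) (c/r)) = Set.Ioo 0 (c/r) := interior_Icc
  have hbpos : 0 < beta := lt_of_lt_of_le one_pos hbeta
  have hdpos : 0 < d := by linarith
  refine ⟨?_, ?_, ?_, ?_, ?_⟩
  · -- StrictAntiOn
    apply strictAntiOn_of_deriv_neg (convex_Icc _ _) hcont.continuousOn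
    intro x hx
    rw [hintIcc] at hx
    rw [hD1 x]
    have hgp := Real.rpow_pos_of_pos (hgpos x hx) (d-1)
    have h1 : 0 < beta * (r/c) * d * (g x)^(d-1) :=
      mul_pos (mul_pos (mul_pos hbpos (div_pos hr hc)) hdpos) hgp
    nlinarith [h1]
  · -- ConvexOn
    apply convexOn_of_deriv2_nonneg (convex_Icc _ _) hcont.continuousOn
    · intro x _
      exact ((hH1 x).differentiableAt).differentiableWithinAt
    · intro x hx
      rw [hintIcc] at hx
      exact ((hH2 x hx).differentiableAt).differentiableWithinAt
    · intro x hx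
      rw [hintIcc] at hx
      show 0 ≤ deriv (deriv h) x
      rw [hD2 x hx]
      have hgp : 0 ≤ (g x)^(d-2) := (Real.rpow_pos_of_pos (hgpos x hx) (d-2)).le
      have hd1' : (0:ℝ) ≤ d - 1 := by linarith
      positivity
  · -- h (c/r) = 0
    rw [hh]
    rw [show 1 - r * (c/r) / c = 0 by field_simp; ring]
    rw [Real.zero_rpow (by linarith : d ≠ 0), mul_zero]
  · -- deriv h (c/r) = 0
    rw [hD1]
    rw [show g (c/r) = 0 by show 1 - r*(c/r)/c = 0; field_simp; ring]
    rw [Real.zero_rpow hd1ne]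
    ring
  · -- HJB
    intro w hw α
    have hu : 0 < g w := hgpos w hw
    have hv : 0 < (g w)^(d-2) := Real.rpow_pos_of_pos hu _
    have hu1 : (g w)^(d-1) = g w * (g w)^(d-2) := by
      rw [show d-1 = (d-2)+1 by ring, Real.rpow_add hu, Real.rpow_one]; ring
    have hu2 : (g w)^d = (g w)^(2:ℕ) * (g w)^(d-2) := by
      rw [show d = (d-2)+2 by ring, Real.rpow_add hu, ← Real.rpow_natCast (g w) 2]
      norm_num; ring
    have hhw : h w = beta * (g w)^d := hh w
    have hrw2 : r * w = c - c * g w := by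
      show r*w = c - c * (1 - r*w/c); field_simp; ring
    have hcw : c/r - w = (c/r) * g w := by
      show c/r - w = c/r * (1 - r*w/c); field_simp
    have step1 : (r * w + (mu - r) * α - c) * deriv h w
          + (1/2) * sigma^2 * α^2 * deriv (deriv h) w - lam * h w
        = beta * (g w)^(d-2) * ((1/2)*sigma^2*d*(d-1)*(r/c)^2*α^2
            - (mu-r)*d*(r/c)*(g w)*α + (r*d-lam)*(g w)^(2:ℕ)) := by
      rw [hD1 w, hD2 w hw, hhw, hu1, hu2, hrw2]
      field_simp
      ring
    have hE : (r * w + (mu - r) * α - c) * deriv h w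
          + (1/2) * sigma^2 * α^2 * deriv (deriv h) w - lam * h w
        = beta * (g w)^(d-2) * ((1/2)*sigma^2*d*(d-1)*(r/c)^2)
            * (α - ((mu - r) / (sigma^2 * (d - 1))) * (c/r - w))^2 := by
      rw [step1, hRD, hcw]
      field_simp
      ring
    have hK : 0 < beta * (g w)^(d-2) * ((1/2)*sigma^2*d*(d-1)*(r/c)^2) := by
      have hd1' : (0:ℝ) < d - 1 := by linarith
      positivity
    constructor
    · rw [hE]; positivity
    · rw [hE]
      constructor
      · intro he
        by_contra hne
        have hsq2 : 0 < (α - ((mu - r) / (sigma^2 * (d - 1))) * (c/r - w))^2 := by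
          have : α - ((mu - r) / (sigma^2 * (d - 1))) * (c/r - w) ≠ 0 := sub_ne_zero.mpr hne
          positivity
        nlinarith [mul_pos hK hsq2]
      · intro he; rw [he]; simp
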